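/- arXiv:2409.18504 — 2 statements merged into one kernel-verified Lean document; each statement's English description precedes it below -/
import Mathlib

section
/- Let X = {x_1,...,x_N} be a dataset in R^d with N = K*c, and let X_sample = {x'_1,...,x'_K} be any multiset of K points each drawn from X. Then W_2^2(X, X_sample) >= min over partitions P of [N] into K groups of equal size c of (1/K) * sum over p in P of Var(X_p), where X and X_sample are viewed as uniform empirical measures. -/
open Finset

noncomputable def emean {d : ℕ} {ι : Type*} [Fintype ι] (s : Finset ι)
    (x : ι → EuclideanSpace ℝ (Fin d)) : EuclideanSpace ℝ (Fin d) :=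
  (s.card : ℝ)⁻¹ • ∑ i ∈ s, x i

noncomputable def evar {d : ℕ} {ι : Type*} [Fintype ι] (s : Finset ι)
    (x : ι → EuclideanSpace ℝ (Fin d)) : ℝ :=
  (s.card : ℝ)⁻¹ * ∑ i ∈ s, ‖x i - emean s x‖ ^ 2

/-- The group of index `k` in the partition encoded by `P`. -/
def grp {N K : ℕ} (P : Fin N → Fin K) (k : Fin K) : Finset (Fin N) :=
  Finset.univ.filter (fun i => P i = k)

/-- Squared Wasserstein-2 distance between the uniform empirical measures on the
points `x i, i ∈ s` and `y j, j ∈ t`, as an infimum over couplings. -/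
noncomputable def W2sq {d : ℕ} {ι κ : Type*} [Fintype ι] [Fintype κ]
    (s : Finset ι) (x : ι → EuclideanSpace ℝ (Fin d))
    (t : Finset κ) (y : κ → EuclideanSpace ℝ (Fin d)) : ℝ :=
  sInf { C | ∃ π : ι → κ → ℝ, (∀ i j, 0 ≤ π i j) ∧
    (∀ i ∈ s, ∑ j ∈ t, π i j = (s.card : ℝ)⁻¹) ∧
    (∀ j ∈ t, ∑ i ∈ s, π i j = (t.card : ℝ)⁻¹) ∧
    C = ∑ i ∈ s, ∑ j ∈ t, π i j * ‖x i - y j‖ ^ 2 }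

/-- `Q` is a selection partition from `P`: every group of `Q` contains exactly one
point of every group of `P`. -/
def Selection {N K c : ℕ} (P : Fin N → Fin K) (Q : Fin N → Fin c) : Prop :=
  ∀ j k, (Finset.univ.filter (fun i => Q i = j ∧ P i = k)).card = 1

lemma evar_nonneg {d : ℕ} {ι : Type*} [Fintype ι] (s : Finset ι)
    (x : ι → EuclideanSpace ℝ (Fin d)) : 0 ≤ evar s x :=
  mul_nonneg (inv_nonneg.2 (Nat.cast_nonneg _))
    (Finset.sum_nonneg fun _ _ => sq_nonneg _)

lemma sum_sq_emean_le {d : ℕ} {ι : Type*} [Fintype ι] (s : Finset ι)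
    (hs : s.Nonempty) (x : ι → EuclideanSpace ℝ (Fin d)) (b : EuclideanSpace ℝ (Fin d)) :
    ∑ i ∈ s, ‖x i - emean s x‖ ^ 2 ≤ ∑ i ∈ s, ‖x i - b‖ ^ 2 := by
  set m := emean s x with hm
  have hcard : (s.card : ℝ) ≠ 0 := by
    exact_mod_cast (Finset.card_pos.2 hs).ne'
  have hzero : ∑ i ∈ s, (x i - m) = 0 := by
    rw [Finset.sum_sub_distrib, Finset.sum_const, hm, emean, ← Nat.cast_smul_eq_nsmul ℝ,
      smul_smul, mul_inv_cancel₀ hcard, one_smul, sub_self]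
  have hexp : ∀ i ∈ s, ‖x i - b‖ ^ 2
      = ‖x i - m‖ ^ 2 + 2 * inner ℝ (x i - m) (m - b) + ‖m - b‖ ^ 2 := by
    intro i _
    have : x i - b = (x i - m) + (m - b) := by abel
    rw [this, @norm_add_sq_real]
  rw [Finset.sum_congr rfl hexp]
  simp only [Finset.sum_add_distrib, ← Finset.mul_sum, ← sum_inner, hzero]
  simp only [inner_zero_left, mul_zero, add_zero]
  have : (0:ℝ) ≤ ∑ _i ∈ s, ‖m - b‖ ^ 2 := Finset.sum_nonneg fun _ _ => sq_nonneg _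
  linarith

/-- for any multiset of `K` points drawn from the dataset `X` of `N = K*c`
points, the squared Wasserstein-2 distance between `X` and the subsample is at least the
minimal average within-group variance over balanced partitions into `K` groups of size `c`. -/
theorem subsample_wasserstein_deviation_lower_bound {d N K c : ℕ}
    (hK : 0 < K) (hc : 0 < c) (hN : N = K * c)
    (x : Fin N → EuclideanSpace ℝ (Fin d)) (y : Fin K → EuclideanSpace ℝ (Fin d))
    (hy : ∀ k, ∃ i, y k = x i) :
    sInf { v | ∃ P : Fin N → Fin K, (∀ k, (grp P k).card = c) ∧
        v = (K : ℝ)⁻¹ * ∑ k, evar (grp P k) x }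
      ≤ W2sq Finset.univ x Finset.univ y := by
  classical
  subst hN
  have hKne : (K:ℝ) ≠ 0 := Nat.cast_ne_zero.2 hK.ne'
  have hcne : (c:ℝ) ≠ 0 := Nat.cast_ne_zero.2 hc.ne'
  have hNne : ((K*c : ℕ):ℝ) ≠ 0 := by push_cast; positivity
  set Spart := { v | ∃ P : Fin (K*c) → Fin K, (∀ k, (grp P k).card = c) ∧
        v = (K : ℝ)⁻¹ * ∑ k, evar (grp P k) x } with hSpartdef
  have hbdd : BddBelow Spart := by
    refine ⟨0, ?_⟩
    rintro v ⟨P, hP, rfl⟩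
    exact mul_nonneg (by positivity) (Finset.sum_nonneg fun k _ => evar_nonneg _ _)
  rw [W2sq]
  refine le_csInf ⟨∑ i, ∑ j, (((K*c:ℕ):ℝ) * K)⁻¹ * ‖x i - y j‖^2,
    fun _ _ => (((K*c:ℕ):ℝ) * K)⁻¹, fun _ _ => by positivity, ?_, ?_, rfl⟩ ?_
  · intro i _
    simp only [Finset.sum_const, card_univ, Fintype.card_fin, nsmul_eq_mul]
    field_simp
  · intro j _
    simp only [Finset.sum_const, card_univ, Fintype.card_fin, nsmul_eq_mul]
    push_cast
    field_simp
  rintro C ⟨π, hpos, hrow, hcol, rfl⟩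
  simp only [card_univ, Fintype.card_fin] at hrow hcol
  -- grouping map
  set e : Fin K × Fin c ≃ Fin (K*c) := finProdFinEquiv with hedef
  set g : Fin (K*c) → Fin K := fun j' => (e.symm j').1 with hgdef
  have hfiber : ∀ (f : Fin K → ℝ), ∑ j', f (g j') = ∑ j, (c:ℝ) * f j := by
    intro f
    rw [← Equiv.sum_comp e (fun j' => f (g j'))]
    simp [hgdef, Fintype.sum_prod_type, Finset.sum_const, mul_comm]
  have hfc : ∀ k : Fin K, (∑ j' : Fin (K*c), if g j' = k then 1 else 0) = c := by
    intro k
    refine ((Equiv.sum_comp e (fun j' => if g j' = k then 1 else 0)).symm).trans ?_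
    have hge : ∀ p : Fin K × Fin c, g (e p) = p.1 := by
      intro p; simp [hgdef]
    simp only [hge]
    rw [Fintype.sum_prod_type]
    simp [Finset.sum_ite_eq', Finset.sum_const, card_univ, apply_ite Finset.card]
  have hfibcard : ∀ (σ : Equiv.Perm (Fin (K*c))) (k : Fin K),
      (grp (fun i => g (σ i)) k).card = c := by
    intro σ k
    rw [grp, Finset.card_filter]
    exact (Equiv.sum_comp σ (fun j' => if g j' = k then 1 else 0)).trans (hfc k)
  -- the doubly stochastic matrix
  set M : Matrix (Fin (K*c)) (Fin (K*c)) ℝ :=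
    Matrix.of (fun i j' => (K:ℝ) * π i (g j')) with hMdef
  have hM : M ∈ doublyStochastic ℝ (Fin (K*c)) := by
    rw [mem_doublyStochastic_iff_sum]
    refine ⟨fun i j => mul_nonneg (by positivity) (hpos _ _), ?_, ?_⟩
    · intro i
      show ∑ j', (K:ℝ) * π i (g j') = 1
      rw [hfiber (fun j => (K:ℝ) * π i j)]
      simp only [← Finset.mul_sum]
      rw [hrow i (mem_univ i)]
      push_cast
      field_simp
    · intro j'
      show ∑ i, (K:ℝ) * π i (g j') = 1
      rw [← Finset.mul_sum, hcol _ (mem_univ _)]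
      field_simp
  obtain ⟨w, hw0, hw1, hwM⟩ := exists_eq_sum_perm_of_mem_doublyStochastic hM
  have hMentry : ∀ i j', M i j' = ∑ σ : Equiv.Perm (Fin (K*c)),
      w σ * (if σ i = j' then 1 else 0) := by
    intro i j'
    conv_lhs => rw [← hwM]
    simp [Matrix.sum_apply, Equiv.Perm.permMatrix, PEquiv.toMatrix_apply,
      Equiv.toPEquiv_apply, smul_eq_mul]
  -- step 1
  have step1 : ∑ i, ∑ j, π i j * ‖x i - y j‖^2
      = ((K*c:ℕ):ℝ)⁻¹ * ∑ j', ∑ i, M i j' * ‖x i - y (g j')‖^2 := by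
    have h : ∑ j', ∑ i, M i j' * ‖x i - y (g j')‖^2
        = ∑ j, (c:ℝ) * ∑ i, (K:ℝ) * π i j * ‖x i - y j‖^2 :=
      hfiber (fun j => ∑ i, (K:ℝ) * π i j * ‖x i - y j‖^2)
    rw [h, Finset.mul_sum]
    rw [Finset.sum_comm]
    refine Finset.sum_congr rfl fun j _ => ?_
    rw [Finset.mul_sum, Finset.mul_sum]
    refine Finset.sum_congr rfl fun i _ => ?_
    push_cast
    field_simp
  -- step 2
  have step2 : ∑ j', ∑ i, M i j' * ‖x i - y (g j')‖^2
      = ∑ σ : Equiv.Perm (Fin (K*c)), w σ * ∑ i, ‖x i - y (g (σ i))‖^2 := by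
    simp_rw [hMentry, Finset.sum_mul, mul_assoc, ite_mul, one_mul, zero_mul,
      mul_ite, mul_zero]
    rw [Finset.sum_comm]
    refine (Finset.sum_congr rfl fun i _ => Finset.sum_comm).trans ?_
    rw [Finset.sum_comm]
    refine Finset.sum_congr rfl fun σ _ => ?_
    rw [Finset.mul_sum]
    refine Finset.sum_congr rfl fun i _ => ?_
    rw [Finset.sum_ite_eq]
    simp
  -- step 3: each permutation gives a balanced partition whose value lower-bounds
  have step3 : ∀ σ : Equiv.Perm (Fin (K*c)),
      sInf Spart ≤ ((K*c:ℕ):ℝ)⁻¹ * ∑ i, ‖x i - y (g (σ i))‖^2 := by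
    intro σ
    set P : Fin (K*c) → Fin K := fun i => g (σ i) with hPdef
    have hmem : (K:ℝ)⁻¹ * ∑ k, evar (grp P k) x ∈ Spart := ⟨P, hfibcard σ, rfl⟩
    refine le_trans (csInf_le hbdd hmem) ?_
    have hsplit : ∑ i, ‖x i - y (P i)‖^2 = ∑ k, ∑ i ∈ grp P k, ‖x i - y k‖^2 := by
      rw [← Finset.sum_fiberwise univ P (fun i => ‖x i - y (P i)‖^2)]
      refine Finset.sum_congr rfl fun k _ => Finset.sum_congr rfl fun i hi => ?_
      have hik : P i = k := (Finset.mem_filter.1 hi).2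
      rw [hik]
    have hev : ∀ k, (c:ℝ) * evar (grp P k) x ≤ ∑ i ∈ grp P k, ‖x i - y k‖^2 := by
      intro k
      have hcard : (grp P k).card = c := hfibcard σ k
      have hne : (grp P k).Nonempty := Finset.card_pos.1 (by rw [hcard]; exact hc)
      rw [evar, hcard, ← mul_assoc, mul_inv_cancel₀ hcne, one_mul]
      exact sum_sq_emean_le _ hne x (y k)
    calc (K:ℝ)⁻¹ * ∑ k, evar (grp P k) x
        = ((K*c:ℕ):ℝ)⁻¹ * ∑ k, (c:ℝ) * evar (grp P k) x := by
          rw [Finset.mul_sum, Finset.mul_sum]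
          refine Finset.sum_congr rfl fun k _ => ?_
          push_cast
          field_simp
      _ ≤ ((K*c:ℕ):ℝ)⁻¹ * ∑ k, ∑ i ∈ grp P k, ‖x i - y k‖^2 :=
          mul_le_mul_of_nonneg_left (Finset.sum_le_sum fun k _ => hev k) (by positivity)
      _ = ((K*c:ℕ):ℝ)⁻¹ * ∑ i, ‖x i - y (P i)‖^2 := by rw [hsplit]
  -- conclusion
  calc sInf Spart = ∑ σ : Equiv.Perm (Fin (K*c)), w σ * sInf Spart := by
        rw [← Finset.sum_mul, hw1, one_mul]
    _ ≤ ∑ σ : Equiv.Perm (Fin (K*c)),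
          w σ * (((K*c:ℕ):ℝ)⁻¹ * ∑ i, ‖x i - y (g (σ i))‖^2) :=
        Finset.sum_le_sum fun σ _ => mul_le_mul_of_nonneg_left (step3 σ) (hw0 σ)
    _ = ((K*c:ℕ):ℝ)⁻¹ * ∑ σ : Equiv.Perm (Fin (K*c)),
          w σ * ∑ i, ‖x i - y (g (σ i))‖^2 := by
        rw [Finset.mul_sum]
        exact Finset.sum_congr rfl fun σ _ => by ring
    _ = ∑ i, ∑ j, π i j * ‖x i - y j‖^2 := by rw [← step2, ← step1]
end

section
/- Let X = {x_1,...,x_N} in R^d with N = K*c, and let P be a partition into K equal groups of size c. For every partition Q in Q(P) (selecting one point per group of P), the variance of the multiset of subgroup means satisfies Var(E(X_Q)) <= Var(bar{X}_P), where bar{X}_P is the Wasserstein barycenter of the empirical measures {X_p : p in P} with uniform weights. Moreover, equality holds for the partition Q({T_p}) constructed from the optimal transport maps T_p from bar{X}_P to each X_p: in that case the multiset of subgroup means of Q({T_p}) equals the support of bar{X}_P, i.e., W_2(E(X_{Q({T_p})}), bar{X}_P) = 0. -/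
open Finset

/-- `b` is a (uniform-weight) Wasserstein barycenter of the empirical measures of the
groups of `Q`, among uniform empirical measures on `m` points. -/
def IsBary {d N c m : ℕ} (x : Fin N → EuclideanSpace ℝ (Fin d)) (Q : Fin N → Fin c)
    (b : Fin m → EuclideanSpace ℝ (Fin d)) : Prop :=
  ∀ b' : Fin m → EuclideanSpace ℝ (Fin d),
    ∑ j, W2sq (grp Q j) x Finset.univ b ≤ ∑ j, W2sq (grp Q j) x Finset.univ b'

lemma sum_norm_sub_sq {d : ℕ} {ι : Type*} [Fintype ι] (s : Finset ι)
    (x : ι → EuclideanSpace ℝ (Fin d)) (a : EuclideanSpace ℝ (Fin d))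
    (hs : s.Nonempty) :
    ∑ i ∈ s, ‖x i - a‖ ^ 2
      = ∑ i ∈ s, ‖x i - emean s x‖ ^ 2 + (s.card : ℝ) * ‖emean s x - a‖ ^ 2 := by
  set e := emean s x with he
  have hcard : (s.card : ℝ) ≠ 0 :=
    Nat.cast_ne_zero.mpr (Finset.card_pos.mpr hs).ne'
  have hzero : ∑ i ∈ s, (x i - e) = 0 := by
    rw [Finset.sum_sub_distrib, Finset.sum_const, he, emean,
      ← Nat.cast_smul_eq_nsmul ℝ, smul_smul, mul_inv_cancel₀ hcard, one_smul, sub_self]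
  have expand : ∀ i, ‖x i - a‖ ^ 2
      = ‖x i - e‖ ^ 2 + 2 * inner ℝ (x i - e) (e - a) + ‖e - a‖ ^ 2 := by
    intro i
    have : x i - a = (x i - e) + (e - a) := by abel
    rw [this, norm_add_sq_real]
  rw [Finset.sum_congr rfl fun i _ => expand i]
  rw [Finset.sum_add_distrib, Finset.sum_add_distrib, ← Finset.mul_sum,
    ← sum_inner, hzero]
  simp [mul_comm]

lemma W2sq_setNonneg {d : ℕ} {ι κ : Type*} [Fintype ι] [Fintype κ]
    (s : Finset ι) (x : ι → EuclideanSpace ℝ (Fin d))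
    (t : Finset κ) (y : κ → EuclideanSpace ℝ (Fin d)) :
    ∀ C ∈ { C | ∃ π : ι → κ → ℝ, (∀ i j, 0 ≤ π i j) ∧
      (∀ i ∈ s, ∑ j ∈ t, π i j = (s.card : ℝ)⁻¹) ∧
      (∀ j ∈ t, ∑ i ∈ s, π i j = (t.card : ℝ)⁻¹) ∧
      C = ∑ i ∈ s, ∑ j ∈ t, π i j * ‖x i - y j‖ ^ 2 }, 0 ≤ C := by
  rintro C ⟨π, hπ, -, -, rfl⟩
  exact Finset.sum_nonneg fun i _ => Finset.sum_nonneg fun j _ =>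
    mul_nonneg (hπ i j) (sq_nonneg _)

lemma W2sq_le {d : ℕ} {ι κ : Type*} [Fintype ι] [Fintype κ]
    (s : Finset ι) (x : ι → EuclideanSpace ℝ (Fin d))
    (t : Finset κ) (y : κ → EuclideanSpace ℝ (Fin d))
    (π : ι → κ → ℝ) (h0 : ∀ i j, 0 ≤ π i j)
    (h1 : ∀ i ∈ s, ∑ j ∈ t, π i j = (s.card : ℝ)⁻¹)
    (h2 : ∀ j ∈ t, ∑ i ∈ s, π i j = (t.card : ℝ)⁻¹) :
    W2sq s x t y ≤ ∑ i ∈ s, ∑ j ∈ t, π i j * ‖x i - y j‖ ^ 2 :=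
  csInf_le ⟨0, fun C hC => W2sq_setNonneg s x t y C hC⟩ ⟨π, h0, h1, h2, rfl⟩

lemma W2sq_symm {d : ℕ} {ι κ : Type*} [Fintype ι] [Fintype κ]
    (s : Finset ι) (x : ι → EuclideanSpace ℝ (Fin d))
    (t : Finset κ) (y : κ → EuclideanSpace ℝ (Fin d)) :
    W2sq s x t y = W2sq t y s x := by
  unfold W2sq
  congr 1
  ext C
  constructor
  · rintro ⟨π, h0, h1, h2, rfl⟩
    exact ⟨fun j i => π i j, fun j i => h0 i j, h2, h1, by
      rw [Finset.sum_comm]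
      exact Finset.sum_congr rfl fun i _ => Finset.sum_congr rfl fun j _ => by
        rw [norm_sub_rev]⟩
  · rintro ⟨π, h0, h1, h2, rfl⟩
    exact ⟨fun i j => π j i, fun i j => h0 j i, h2, h1, by
      rw [Finset.sum_comm]
      exact Finset.sum_congr rfl fun i _ => Finset.sum_congr rfl fun j _ => by
        rw [norm_sub_rev]⟩

lemma W2sq_self_eq_zero {d : ℕ} {κ : Type*} [Fintype κ] [DecidableEq κ]
    (y : κ → EuclideanSpace ℝ (Fin d)) :
    W2sq Finset.univ y Finset.univ y = 0 := by
  have hmem : (0 : ℝ) ∈ { C | ∃ π : κ → κ → ℝ, (∀ i j, 0 ≤ π i j) ∧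
      (∀ i ∈ (Finset.univ : Finset κ), ∑ j, π i j = ((Finset.univ : Finset κ).card : ℝ)⁻¹) ∧
      (∀ j ∈ (Finset.univ : Finset κ), ∑ i, π i j = ((Finset.univ : Finset κ).card : ℝ)⁻¹) ∧
      C = ∑ i, ∑ j, π i j * ‖y i - y j‖ ^ 2 } := by
    refine ⟨fun i j => if j = i then ((Finset.univ : Finset κ).card : ℝ)⁻¹ else 0,
      fun i j => by positivity, fun i _ => by simp, fun j _ => by simp, ?_⟩
    rw [eq_comm]
    refine Finset.sum_eq_zero fun i _ => Finset.sum_eq_zero fun j _ => ?_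
    by_cases h : j = i
    · subst h; simp
    · simp [h]
  exact le_antisymm
    (csInf_le ⟨0, fun C hC => W2sq_setNonneg _ _ _ _ C hC⟩ hmem)
    (le_csInf ⟨0, hmem⟩ (W2sq_setNonneg _ _ _ _))

/-- for every selection partition `Q' ∈ Q(P)`, the variance of the multiset
of subgroup means is at most the variance of the Wasserstein barycenter `bar X_P` of the
group measures `{X_p}`; moreover, for the partition `Q` built by matching along optimal
transport maps `T_p` from `bar X_P` to each `X_p`, equality holds: the subgroup means of
`Q` coincide (in `W₂`) with the support of `bar X_P`. -/
theorem selection_mean_variance_le_barycenter_variance {d N K c : ℕ}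
    (hK : 0 < K) (hc : 0 < c) (hN : N = K * c)
    (x : Fin N → EuclideanSpace ℝ (Fin d)) (P : Fin N → Fin K)
    (hPbal : ∀ k, (grp P k).card = c)
    (b : Fin c → EuclideanSpace ℝ (Fin d)) (hb : IsBary x P b)
    (T : Fin K → Fin c → Fin N)
    (hTmem : ∀ p j, P (T p j) = p)
    (hTinj : ∀ p, Function.Injective (T p))
    (hTopt : ∀ p, (c : ℝ)⁻¹ * ∑ j, ‖b j - x (T p j)‖ ^ 2
      = W2sq Finset.univ b (grp P p) x)
    (Q : Fin N → Fin c) (hQT : ∀ p j, Q (T p j) = j) :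
    (∀ Q' : Fin N → Fin c, Selection P Q' →
        evar Finset.univ (fun j => emean (grp Q' j) x) ≤ evar Finset.univ b) ∧
    W2sq Finset.univ (fun j => emean (grp Q j) x) Finset.univ b = 0 := by
  classical
  have hcR : (0:ℝ) < (c:ℝ) := by exact_mod_cast hc
  have hKR : (0:ℝ) < (K:ℝ) := by exact_mod_cast hK
  have instK : Nonempty (Fin K) := ⟨⟨0, hK⟩⟩
  have instc : Nonempty (Fin c) := ⟨⟨0, hc⟩⟩
  -- bijectivity of (p,j) ↦ T p j
  have hTbij : Function.Bijective (fun pj : Fin K × Fin c => T pj.1 pj.2) := by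
    rw [Fintype.bijective_iff_injective_and_card]
    refine ⟨?_, by simp [hN]⟩
    rintro ⟨p, j⟩ ⟨p', j'⟩ h
    simp only at h
    have hp : p = p' := by rw [← hTmem p j, ← hTmem p' j', h]
    have hj : j = j' := by rw [← hQT p j, ← hQT p' j', h]
    exact Prod.ext hp hj
  have hTinj2 : ∀ j, Function.Injective (fun p => T p j) := by
    intro j p p' h
    have h2 := hTmem p j
    rw [show T p j = T p' j from h, hTmem] at h2
    exact h2.symm
  have hgrpP : ∀ p, grp P p = Finset.image (fun j => T p j) Finset.univ := by
    intro p
    refine (Finset.eq_of_subset_of_card_le ?_ ?_).symm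
    · intro i hi
      simp only [Finset.mem_image, Finset.mem_univ, true_and] at hi
      obtain ⟨j, rfl⟩ := hi
      simp [grp, hTmem]
    · rw [Finset.card_image_of_injective _ (hTinj p), hPbal]
      simp
  have hgrpQ : ∀ j, grp Q j = Finset.image (fun p => T p j) Finset.univ := by
    intro j
    ext i
    simp only [grp, Finset.mem_filter, Finset.mem_univ, true_and, Finset.mem_image]
    constructor
    · intro hQi
      obtain ⟨⟨p, j'⟩, rfl⟩ := hTbij.2 i
      simp only at hQi
      rw [hQT] at hQi
      subst hQi
      exact ⟨p, rfl⟩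
    · rintro ⟨p, rfl⟩
      exact hQT p j
  have hcardQ : ∀ j, (grp Q j).card = K := by
    intro j
    rw [hgrpQ, Finset.card_image_of_injective _ (hTinj2 j), Finset.card_univ,
      Fintype.card_fin]
  -- Q is a selection
  have hQsel : Selection P Q := by
    intro j p
    have hset : Finset.univ.filter (fun i => Q i = j ∧ P i = p) = {T p j} := by
      ext i
      simp only [Finset.mem_filter, Finset.mem_univ, true_and, Finset.mem_singleton]
      constructor
      · rintro ⟨hQi, hPi⟩
        obtain ⟨⟨p', j'⟩, rfl⟩ := hTbij.2 i
        simp only at hQi hPi ⊢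
        rw [hQT] at hQi
        rw [hTmem] at hPi
        rw [hQi, hPi]
      · rintro rfl
        exact ⟨hQT p j, hTmem p j⟩
    rw [hset, Finset.card_singleton]
  -- coupling upper bound for selections
  have ub : ∀ (Q'' : Fin N → Fin c), Selection P Q'' →
      ∀ (y : Fin c → EuclideanSpace ℝ (Fin d)) (p : Fin K),
      W2sq (grp P p) x Finset.univ y
        ≤ (c:ℝ)⁻¹ * ∑ i ∈ grp P p, ‖x i - y (Q'' i)‖ ^ 2 := by
    intro Q'' hsel y p
    have hle := W2sq_le (grp P p) x Finset.univ y
      (fun i j => if Q'' i = j then (c:ℝ)⁻¹ else 0)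
      (fun i j => by positivity)
      (fun i _ => by simp [hPbal p])
      (fun j _ => by
        rw [Finset.sum_ite, Finset.sum_const, Finset.sum_const_zero, add_zero,
          nsmul_eq_mul]
        have hset : (grp P p).filter (fun i => Q'' i = j)
            = Finset.univ.filter (fun i => Q'' i = j ∧ P i = p) := by
          ext i
          simp only [grp, Finset.mem_filter, Finset.mem_univ, true_and]
          tauto
        rw [hset, hsel j p]
        simp)
    refine hle.trans_eq ?_
    rw [Finset.mul_sum]
    exact Finset.sum_congr rfl fun i _ => by simp [ite_mul]
  -- optimality of T restated
  have hTopt' : ∀ p, W2sq (grp P p) x Finset.univ b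
      = (c:ℝ)⁻¹ * ∑ j, ‖x (T p j) - b j‖ ^ 2 := by
    intro p
    rw [W2sq_symm, ← hTopt p]
    congr 1
    exact Finset.sum_congr rfl fun j _ => by rw [norm_sub_rev]
  -- column means
  have hmean_col : ∀ j, emean Finset.univ (fun p => x (T p j)) = emean (grp Q j) x := by
    intro j
    rw [emean, emean, hcardQ, Finset.card_univ, Fintype.card_fin]
    congr 1
    rw [hgrpQ, Finset.sum_image (fun a _ a' _ h => hTinj2 j h)]
  -- parallel axis identity over columns
  have hWbWm : ∑ p, ∑ j, ‖x (T p j) - b j‖ ^ 2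
      = (∑ p, ∑ j, ‖x (T p j) - emean (grp Q j) x‖ ^ 2)
        + (K:ℝ) * ∑ j, ‖emean (grp Q j) x - b j‖ ^ 2 := by
    rw [Finset.sum_comm, Finset.sum_comm (s := (Finset.univ : Finset (Fin K)))]
    rw [Finset.mul_sum, ← Finset.sum_add_distrib]
    refine Finset.sum_congr rfl fun j _ => ?_
    have h := sum_norm_sub_sq (Finset.univ : Finset (Fin K)) (fun p => x (T p j)) (b j)
      Finset.univ_nonempty
    rw [hmean_col j, Finset.card_univ, Fintype.card_fin] at h
    exact h
  -- sums over grp P p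
  have hsumgrpP : ∀ (p : Fin K) (y : Fin c → EuclideanSpace ℝ (Fin d)),
      ∑ i ∈ grp P p, ‖x i - y (Q i)‖ ^ 2 = ∑ j, ‖x (T p j) - y j‖ ^ 2 := by
    intro p y
    rw [hgrpP p, Finset.sum_image (fun a _ a' _ h => hTinj p h)]
    exact Finset.sum_congr rfl fun j _ => by rw [hQT]
  -- barycenter fixed point: b = group means of Q
  have hbm : b = fun j => emean (grp Q j) x := by
    have h1 := hb (fun j => emean (grp Q j) x)
    have h2 : ∑ p, W2sq (grp P p) x Finset.univ (fun j => emean (grp Q j) x)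
        ≤ (c:ℝ)⁻¹ * ∑ p, ∑ j, ‖x (T p j) - emean (grp Q j) x‖ ^ 2 := by
      rw [Finset.mul_sum]
      exact Finset.sum_le_sum fun p _ =>
        (ub Q hQsel (fun j => emean (grp Q j) x) p).trans_eq (by
          rw [hsumgrpP p (fun j => emean (grp Q j) x)])
    have h3 : ∑ p, W2sq (grp P p) x Finset.univ b
        = (c:ℝ)⁻¹ * ∑ p, ∑ j, ‖x (T p j) - b j‖ ^ 2 := by
      rw [Finset.mul_sum]
      exact Finset.sum_congr rfl fun p _ => hTopt' p
    have h4 : ∑ j, ‖emean (grp Q j) x - b j‖ ^ 2 ≤ 0 := by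
      have h5 := h1.trans h2
      rw [h3, hWbWm, mul_add] at h5
      have hnn : (0:ℝ) ≤ ∑ j, ‖emean (grp Q j) x - b j‖ ^ 2 :=
        Finset.sum_nonneg fun j _ => sq_nonneg _
      nlinarith [mul_pos (inv_pos.mpr hcR) hKR]
    have h6 : ∀ j ∈ Finset.univ, ‖emean (grp Q j) x - b j‖ ^ 2 = 0 :=
      (Finset.sum_eq_zero_iff_of_nonneg (fun j _ => sq_nonneg _)).mp
        (le_antisymm h4 (Finset.sum_nonneg fun j _ => sq_nonneg _))
    funext j
    have h7 := h6 j (Finset.mem_univ j)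
    rw [sq_eq_zero_iff, norm_eq_zero, sub_eq_zero] at h7
    exact h7.symm
  -- mean of group means is the grand mean
  have hmeanmeans : ∀ (Q'' : Fin N → Fin c), (∀ j, (grp Q'' j).card = K) →
      emean Finset.univ (fun j => emean (grp Q'' j) x) = emean Finset.univ x := by
    intro Q'' hcard
    have hNc : (N:ℝ) = (K:ℝ) * (c:ℝ) := by rw [hN]; push_cast; ring
    simp only [emean, hcard, Finset.card_univ, Fintype.card_fin]
    simp only [grp]
    rw [← Finset.smul_sum, Finset.sum_fiberwise Finset.univ Q'' x, smul_smul]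
    congr 1
    rw [hNc]
    field_simp
  -- law of total variance
  have tv : ∀ (Q'' : Fin N → Fin c), (∀ j, (grp Q'' j).card = K) →
      ∑ i, ‖x i - emean Finset.univ x‖ ^ 2
        = (∑ j, ∑ i ∈ grp Q'' j, ‖x i - emean (grp Q'' j) x‖ ^ 2)
          + (K:ℝ) * ∑ j, ‖emean (grp Q'' j) x - emean Finset.univ x‖ ^ 2 := by
    intro Q'' hcard
    rw [show (∑ i, ‖x i - emean Finset.univ x‖ ^ 2)
        = ∑ j, ∑ i ∈ grp Q'' j, ‖x i - emean Finset.univ x‖ ^ 2 by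
      simp only [grp]
      exact (Finset.sum_fiberwise Finset.univ Q''
        (fun i => ‖x i - emean Finset.univ x‖ ^ 2)).symm]
    rw [Finset.mul_sum, ← Finset.sum_add_distrib]
    refine Finset.sum_congr rfl fun j _ => ?_
    have hne : (grp Q'' j).Nonempty :=
      Finset.card_pos.mp (by rw [hcard]; exact hK)
    have h := sum_norm_sub_sq (grp Q'' j) x (emean Finset.univ x) hne
    rw [hcard] at h
    exact h
  constructor
  · -- main inequality
    intro Q' hsel
    have hcardQ' : ∀ j, (grp Q' j).card = K := by
      intro j
      rw [Finset.card_eq_sum_card_fiberwise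
        (f := P) (t := Finset.univ) (fun i _ => Finset.mem_univ _)]
      have hone : ∀ k, ((grp Q' j).filter (fun i => P i = k)).card = 1 := by
        intro k
        have hset : (grp Q' j).filter (fun i => P i = k)
            = Finset.univ.filter (fun i => Q' i = j ∧ P i = k) := by
          ext i
          simp only [grp, Finset.mem_filter, Finset.mem_univ, true_and]
          try tauto
        rw [hset, hsel j k]
      simp [hone]
    -- W ≤ Wmu
    have key : (∑ p, ∑ j, ‖x (T p j) - emean (grp Q j) x‖ ^ 2)
        ≤ ∑ j, ∑ i ∈ grp Q' j, ‖x i - emean (grp Q' j) x‖ ^ 2 := by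
      have h3 : ∑ p, W2sq (grp P p) x Finset.univ b
          = (c:ℝ)⁻¹ * ∑ p, ∑ j, ‖x (T p j) - emean (grp Q j) x‖ ^ 2 := by
        rw [Finset.mul_sum]
        refine Finset.sum_congr rfl fun p _ => ?_
        rw [hTopt' p]
        congr 1
        exact Finset.sum_congr rfl fun j _ => by rw [hbm]
      have h1 := hb (fun j => emean (grp Q' j) x)
      have h2 : ∑ p, W2sq (grp P p) x Finset.univ (fun j => emean (grp Q' j) x)
          ≤ (c:ℝ)⁻¹ * ∑ j, ∑ i ∈ grp Q' j, ‖x i - emean (grp Q' j) x‖ ^ 2 := by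
        have l2 : ∑ j, ∑ i ∈ grp Q' j, ‖x i - emean (grp Q' j) x‖ ^ 2
            = ∑ p, ∑ i ∈ grp P p, ‖x i - emean (grp Q' (Q' i)) x‖ ^ 2 := by
          rw [show (∑ p, ∑ i ∈ grp P p, ‖x i - emean (grp Q' (Q' i)) x‖ ^ 2)
              = ∑ i, ‖x i - emean (grp Q' (Q' i)) x‖ ^ 2 by
            simp only [grp]
            exact Finset.sum_fiberwise Finset.univ P
              (fun i => ‖x i - emean (grp Q' (Q' i)) x‖ ^ 2)]
          rw [show (∑ i, ‖x i - emean (grp Q' (Q' i)) x‖ ^ 2)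
              = ∑ j, ∑ i ∈ grp Q' j, ‖x i - emean (grp Q' (Q' i)) x‖ ^ 2 by
            simp only [grp]
            exact (Finset.sum_fiberwise Finset.univ Q'
              (fun i => ‖x i - emean (grp Q' (Q' i)) x‖ ^ 2)).symm]
          refine Finset.sum_congr rfl fun j _ => ?_
          refine Finset.sum_congr rfl fun i hi => ?_
          rw [show Q' i = j from (Finset.mem_filter.mp hi).2]
        rw [l2, Finset.mul_sum]
        exact Finset.sum_le_sum fun p _ => ub Q' hsel _ p
      rw [h3] at h1
      have h6 := h1.trans h2
      exact le_of_mul_le_mul_left h6 (inv_pos.mpr hcR)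
    -- total variance identities
    have tvμ := tv Q' hcardQ'
    have tvm := tv Q hcardQ
    have hWm' : (∑ j, ∑ i ∈ grp Q j, ‖x i - emean (grp Q j) x‖ ^ 2)
        = ∑ p, ∑ j, ‖x (T p j) - emean (grp Q j) x‖ ^ 2 := by
      rw [Finset.sum_comm]
      refine Finset.sum_congr rfl fun j _ => ?_
      rw [hgrpQ j, Finset.sum_image (fun a _ a' _ h => hTinj2 j h)]
    rw [hWm'] at tvm
    have hsums : ∑ j, ‖emean (grp Q' j) x - emean Finset.univ x‖ ^ 2
        ≤ ∑ j, ‖emean (grp Q j) x - emean Finset.univ x‖ ^ 2 := by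
      nlinarith
    have hev1 : evar Finset.univ (fun j => emean (grp Q' j) x)
        = (c:ℝ)⁻¹ * ∑ j, ‖emean (grp Q' j) x - emean Finset.univ x‖ ^ 2 := by
      rw [evar, hmeanmeans Q' hcardQ', Finset.card_univ, Fintype.card_fin]
    have hev2 : evar Finset.univ b
        = (c:ℝ)⁻¹ * ∑ j, ‖emean (grp Q j) x - emean Finset.univ x‖ ^ 2 := by
      rw [hbm, evar, hmeanmeans Q hcardQ, Finset.card_univ, Fintype.card_fin]
    rw [hev1, hev2]
    exact mul_le_mul_of_nonneg_left hsums (le_of_lt (inv_pos.mpr hcR))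
  · -- equality part
    rw [← hbm]
    exact W2sq_self_eq_zero b
end
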